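/- Let R = 𝔽₂[ℤ³] be the group algebra over 𝔽₂ of ℤ³, with augmentation homomorphism ε : R → 𝔽₂ sending each T_i to 1. Let C be a finite free R-module and ∂ : C → C an R-linear map with ∂ ∘ ∂ = 0. If ker(∂) = range(∂) (i.e., the homology of the differential module (C, ∂) vanishes), then the base-changed differential ∂̄ on C ⊗_{R,ε} 𝔽₂ also satisfies ker(∂̄) = range(∂̄), i.e., the homology of (C ⊗_{R,ε} 𝔽₂, ∂̄) vanishes. -/

import Mathlib

/-- The group algebra `R = 𝔽₂[ℤ³]`. -/
abbrev GroupAlgZ3 : Type := AddMonoidAlgebra (ZMod 2) (Fin 3 → ℤ)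

/-- The augmentation homomorphism `ε : 𝔽₂[ℤ³] → 𝔽₂` sending every group
element (in particular each `T_i`) to `1`. -/
noncomputable def augEps : GroupAlgZ3 →ₐ[ZMod 2] ZMod 2 :=
  AddMonoidAlgebra.lift (ZMod 2) (ZMod 2) (Fin 3 → ℤ) 1

/-- `𝔽₂` as an `𝔽₂[ℤ³]`-algebra via the augmentation `ε`. -/
noncomputable instance : Algebra GroupAlgZ3 (ZMod 2) :=
  (augEps : GroupAlgZ3 →+* ZMod 2).toAlgebra

namespace Stmt13Aux

noncomputable section

local notation "sg" => AddMonoidAlgebra.single (R := ZMod 2) (M := Fin 3 → ℤ)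

/-- Standard basis vectors of `ℤ³`. -/
def ee (i : Fin 3) : Fin 3 → ℤ := Pi.single i 1

/-- The elements `tᵢ = Tᵢ - 1` generating the augmentation ideal. -/
def tt (i : Fin 3) : GroupAlgZ3 := sg (ee i) 1 - 1

/-- Zeroing-out of the `i`-th coordinate, as an additive monoid hom. -/
def zc (i : Fin 3) : (Fin 3 → ℤ) →+ (Fin 3 → ℤ) where
  toFun v := fun j => if j = i then 0 else v j
  map_zero' := by funext j; simp
  map_add' v w := by funext j; by_cases h : j = i <;> simp [h]

/-- The partial augmentation setting `Tᵢ = 1`. -/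
def ψ (i : Fin 3) : GroupAlgZ3 →+* GroupAlgZ3 :=
  AddMonoidAlgebra.mapDomainRingHom (ZMod 2) (zc i)

lemma myInduction (p : GroupAlgZ3 → Prop) (h0 : p 0)
    (hadd : ∀ f g : GroupAlgZ3, p f → p g → p (f + g))
    (hsingle : ∀ v c, p (sg v c)) : ∀ a, p a := fun a =>
  AddMonoidAlgebra.induction_linear a h0 (fun f g => hadd f g) (fun v c => hsingle v c)

lemma ψ_single (i : Fin 3) (v : Fin 3 → ℤ) (c : ZMod 2) :
    ψ i (sg v c) = sg (zc i v) c := by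
  simp [ψ, AddMonoidAlgebra.mapDomainRingHom]

lemma zc_ee_self (i : Fin 3) : zc i (ee i) = 0 := by
  funext k
  simp only [zc, AddMonoidHom.coe_mk, ZeroHom.coe_mk, ee, Pi.single_apply]
  split_ifs with h h' <;> simp_all

lemma zc_ee_ne {i j : Fin 3} (h : j ≠ i) : zc i (ee j) = ee j := by
  funext k
  simp only [zc, AddMonoidHom.coe_mk, ZeroHom.coe_mk, ee, Pi.single_apply]
  split_ifs with h1 h2 <;> simp_all

lemma ψ_tt_self (i : Fin 3) : ψ i (tt i) = 0 := by
  simp [tt, map_sub, ψ_single, zc_ee_self, AddMonoidAlgebra.one_def]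

lemma ψ_tt_ne {i j : Fin 3} (h : j ≠ i) : ψ i (tt j) = tt j := by
  simp [tt, map_sub, ψ_single, zc_ee_ne h]

/-- geometric-series divisibility. -/
lemma geo {A : Type*} [CommRing A] (x : A) (y : ℤ → A) (h0 : y 0 = 1)
    (hs : ∀ n : ℤ, y (n + 1) = y n * x) : ∀ n : ℤ, (x - 1) ∣ (y n - 1) := by
  intro n
  induction n using Int.induction_on with
  | zero => simp [h0]
  | succ n ih =>
    obtain ⟨c, hc⟩ := ih
    exact ⟨y n + c, by linear_combination hs n + hc⟩
  | pred n ih =>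
    obtain ⟨c, hc⟩ := ih
    have h2 := hs (-(n : ℤ) - 1)
    rw [show (-(n : ℤ) - 1 + 1) = -n by ring] at h2
    exact ⟨c - y (-(n : ℤ) - 1), by linear_combination hc - h2⟩

lemma tt_dvd_single (i : Fin 3) (n : ℤ) : tt i ∣ sg (n • ee i) 1 - 1 := by
  have := geo (sg (ee i) 1) (fun n : ℤ => sg (n • ee i) 1) (by simp [AddMonoidAlgebra.one_def])
    (fun n => by
      show sg ((n + 1) • ee i) 1 = sg (n • ee i) 1 * sg (ee i) 1
      rw [AddMonoidAlgebra.single_mul_single, mul_one, add_smul, one_smul])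
  simpa [tt] using this n

lemma single_eq_mul (i : Fin 3) (v : Fin 3 → ℤ) (c : ZMod 2) :
    sg v c = sg (zc i v) c * sg (v i • ee i) 1 := by
  rw [AddMonoidAlgebra.single_mul_single, mul_one]
  congr 1
  funext j
  simp only [zc, AddMonoidHom.coe_mk, ZeroHom.coe_mk, ee, Pi.add_apply, Pi.smul_apply,
    Pi.single_apply, smul_eq_mul]
  by_cases h : j = i <;> simp [h]

/-- key telescoping step for a single monomial. -/
lemma sdiff (i : Fin 3) (v : Fin 3 → ℤ) (c : ZMod 2) :
    tt i ∣ sg v c - sg (zc i v) c := by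
  rw [single_eq_mul i v c]
  have h := (tt_dvd_single i (v i)).mul_left (sg (zc i v) c)
  have e : sg (zc i v) c * sg (v i • ee i) 1 - sg (zc i v) c
      = sg (zc i v) c * (sg (v i • ee i) 1 - 1) := by ring
  rw [e]
  exact h

lemma tele (i : Fin 3) : ∀ a : GroupAlgZ3, tt i ∣ a - ψ i a := by
  refine myInduction _ (by simp) ?_ ?_
  · intro f g hf hg
    have e : f + g - ψ i (f + g) = (f - ψ i f) + (g - ψ i g) := by
      rw [map_add]; ring
    rw [e]; exact dvd_add hf hg
  · intro v c
    rw [ψ_single]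
    exact sdiff i v c

lemma ee_ne_zero (i : Fin 3) : ee i ≠ 0 := by
  intro h
  have := congrFun h i
  simp [ee] at this

lemma tt_ne_zero (i : Fin 3) : tt i ≠ 0 := by
  intro h
  have h2 : sg (ee i) 1 = sg 0 1 := by
    rwa [tt, AddMonoidAlgebra.one_def, sub_eq_zero] at h
  rcases AddMonoidAlgebra.single_inj.mp h2 with ⟨h3, -⟩ | ⟨h4, -⟩
  · exact ee_ne_zero i h3
  · exact one_ne_zero h4

lemma reg0 (a : GroupAlgZ3) (h : tt 0 * a = 0) : a = 0 := by
  rcases mul_eq_zero.mp h with h' | h'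
  · exact absurd h' (tt_ne_zero 0)
  · exact h'

lemma reg1 (a : GroupAlgZ3) (h : tt 1 * a ∈ Ideal.span {tt 0}) :
    a ∈ Ideal.span {tt 0} := by
  rw [Ideal.mem_span_singleton] at h ⊢
  obtain ⟨b, hb⟩ := h
  have hψ := congrArg (ψ 0) hb
  rw [map_mul, map_mul, ψ_tt_ne (by decide : (1 : Fin 3) ≠ 0), ψ_tt_self, zero_mul] at hψ
  have hz : ψ 0 a = 0 := by
    rcases mul_eq_zero.mp hψ with h' | h'
    · exact absurd h' (tt_ne_zero 1)
    · exact h'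
  have := tele 0 a
  rwa [hz, sub_zero] at this

lemma reg2 (a : GroupAlgZ3) (h : tt 2 * a ∈ Ideal.span {tt 0, tt 1}) :
    a ∈ Ideal.span {tt 0, tt 1} := by
  set φ : GroupAlgZ3 →+* GroupAlgZ3 := (ψ 1).comp (ψ 0) with hφ
  have hφ0 : φ (tt 0) = 0 := by simp [hφ, RingHom.comp_apply, ψ_tt_self]
  have hφ1 : φ (tt 1) = 0 := by
    simp [hφ, RingHom.comp_apply, ψ_tt_ne (by decide : (1 : Fin 3) ≠ 0), ψ_tt_self]
  have hφ2 : φ (tt 2) = tt 2 := by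
    simp [hφ, RingHom.comp_apply, ψ_tt_ne (by decide : (2 : Fin 3) ≠ 0),
      ψ_tt_ne (by decide : (2 : Fin 3) ≠ 1)]
  have htele : a - φ a ∈ Ideal.span {tt 0, tt 1} := by
    have e : a - φ a = (a - ψ 0 a) + (ψ 0 a - ψ 1 (ψ 0 a)) := by
      simp only [hφ, RingHom.comp_apply]; ring
    rw [e]
    refine add_mem ?_ ?_
    · exact Ideal.span_mono (by simp) (Ideal.mem_span_singleton.mpr (tele 0 a))
    · exact Ideal.span_mono (by simp) (Ideal.mem_span_singleton.mpr (tele 1 (ψ 0 a)))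
  obtain ⟨x, y, hxy⟩ := Ideal.mem_span_pair.mp h
  have hψ := congrArg φ hxy
  rw [map_add, map_mul, map_mul, map_mul, hφ0, hφ1, mul_zero, mul_zero, add_zero, hφ2] at hψ
  have hz : φ a = 0 := by
    rcases mul_eq_zero.mp hψ.symm with h' | h'
    · exact absurd h' (tt_ne_zero 2)
    · exact h'
  have := htele
  rwa [hz, sub_zero] at this

lemma augEps_single (v : Fin 3 → ℤ) (c : ZMod 2) : augEps (sg v c) = c := by
  simp [augEps]

lemma zc_zc_zc (v : Fin 3 → ℤ) : zc 2 (zc 1 (zc 0 v)) = 0 := by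
  funext j
  fin_cases j <;> simp [zc]

/-- Every element is congruent to its augmentation modulo the ideal
`(t₀, t₁, t₂)`. -/
lemma sub_const_mem : ∀ a : GroupAlgZ3,
    a - sg 0 (augEps a) ∈ Ideal.span {tt 0, tt 1, tt 2} := by
  refine myInduction _ (by simp) ?_ ?_
  · intro f g hf hg
    have e : f + g - sg 0 (augEps (f + g))
        = (f - sg 0 (augEps f)) + (g - sg 0 (augEps g)) := by
      rw [map_add]
      rw [show (sg 0 (augEps f + augEps g) : GroupAlgZ3)
          = sg 0 (augEps f) + sg 0 (augEps g) from AddMonoidAlgebra.single_add 0 _ _]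
      ring
    rw [e]; exact add_mem hf hg
  · intro v c
    rw [augEps_single]
    have e : sg v c - sg 0 c
        = (sg v c - sg (zc 0 v) c) + (sg (zc 0 v) c - sg (zc 1 (zc 0 v)) c)
          + (sg (zc 1 (zc 0 v)) c - sg (zc 2 (zc 1 (zc 0 v))) c) := by
      rw [zc_zc_zc]; ring
    rw [e]
    refine add_mem (add_mem ?_ ?_) ?_
    · exact Ideal.span_mono (by simp) (Ideal.mem_span_singleton.mpr (sdiff 0 v c))
    · exact Ideal.span_mono (by simp) (Ideal.mem_span_singleton.mpr (sdiff 1 (zc 0 v) c))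
    · exact Ideal.span_mono (by simp) (Ideal.mem_span_singleton.mpr (sdiff 2 (zc 1 (zc 0 v)) c))

lemma augEps_tt (i : Fin 3) : augEps (tt i) = 0 := by
  simp [tt, map_sub, augEps_single]

lemma span_le_ker : Ideal.span {tt 0, tt 1, tt 2} ≤ RingHom.ker (augEps : GroupAlgZ3 →+* ZMod 2) := by
  rw [Ideal.span_le]
  rintro x (rfl | rfl | rfl) <;>
    simp [RingHom.mem_ker, augEps_tt]

/-! ### Module-level lemmas -/

section Modules

variable {A M : Type*} [CommRing A] [AddCommGroup M] [Module A M]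

lemma mem_smul_top_iff {ι : Type*} [Fintype ι] (b : Module.Basis ι A M) (J : Ideal A) (z : M) :
    z ∈ J • (⊤ : Submodule A M) ↔ ∀ i, b.repr z i ∈ J := by
  constructor
  · intro h
    refine Submodule.smul_induction_on h ?_ ?_
    · intro r hr n _ i
      rw [map_smul, Finsupp.smul_apply, smul_eq_mul]
      exact Ideal.mul_mem_right _ _ hr
    · intro x y hx hy i
      rw [map_add, Finsupp.add_apply]
      exact J.add_mem (hx i) (hy i)
  · intro h
    rw [← b.sum_repr z]
    exact Submodule.sum_mem _ fun i _ => Submodule.smul_mem_smul (h i) trivial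

lemma regM {ι : Type*} [Fintype ι] (b : Module.Basis ι A M) (t : A) (J : Ideal A)
    (hr : ∀ a : A, t * a ∈ J → a ∈ J) (z : M) (h : t • z ∈ J • (⊤ : Submodule A M)) :
    z ∈ J • (⊤ : Submodule A M) := by
  rw [mem_smul_top_iff b] at h ⊢
  intro i
  apply hr
  have := h i
  rwa [map_smul, Finsupp.smul_apply, smul_eq_mul] at this

lemma mem_span_singleton_smul_top (t : A) (x : M) :
    x ∈ (Ideal.span {t}) • (⊤ : Submodule A M) ↔ ∃ y, x = t • y := by
  constructor
  · intro h
    refine Submodule.smul_induction_on h ?_ ?_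
    · intro r hr n _
      obtain ⟨c, rfl⟩ := Ideal.mem_span_singleton.mp hr
      exact ⟨c • n, (mul_smul t c n)⟩
    · rintro x y ⟨a, rfl⟩ ⟨b, rfl⟩
      exact ⟨a + b, (smul_add t a b).symm⟩
  · rintro ⟨y, rfl⟩
    exact Submodule.smul_mem_smul (Ideal.mem_span_singleton_self t) trivial

lemma smul_top_stable (d : M →ₗ[A] M) (J : Ideal A) {m : M}
    (hm : m ∈ J • (⊤ : Submodule A M)) : d m ∈ J • (⊤ : Submodule A M) := by
  refine Submodule.smul_induction_on hm ?_ ?_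
  · intro r hr u _
    rw [map_smul]
    exact Submodule.smul_mem_smul hr trivial
  · intro x y hx hy
    rw [map_add]
    exact add_mem hx hy

/-- The key inductive step: killing homology passes through quotient by one
regular element. -/
lemma step (d : M →ₗ[A] M) (hd : ∀ x, d (d x) = 0) (J : Ideal A) (t : A)
    (hreg : ∀ z : M, t • z ∈ J • (⊤ : Submodule A M) → z ∈ J • (⊤ : Submodule A M))
    (hP : ∀ x, d x ∈ J • (⊤ : Submodule A M) → ∃ w, x - d w ∈ J • (⊤ : Submodule A M)) :
    ∀ x, d x ∈ (J ⊔ Ideal.span {t}) • (⊤ : Submodule A M) →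
      ∃ w, x - d w ∈ (J ⊔ Ideal.span {t}) • (⊤ : Submodule A M) := by
  intro x hx
  rw [Submodule.sup_smul] at hx
  obtain ⟨n, hn, s, hs, hns⟩ := Submodule.mem_sup.mp hx
  obtain ⟨y, rfl⟩ := (mem_span_singleton_smul_top t s).mp hs
  have h1 : t • d y ∈ J • (⊤ : Submodule A M) := by
    have h0 := congrArg d hns
    rw [map_add, map_smul, hd] at h0
    have : t • d y = -(d n) := by
      have := h0
      linear_combination (norm := abel) this
    rw [this]
    exact neg_mem (smul_top_stable d J hn)
  have h2 := hreg _ h1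
  obtain ⟨w, hw⟩ := hP y h2
  have h3 : d (x - t • w) ∈ J • (⊤ : Submodule A M) := by
    rw [map_sub, map_smul]
    have e : d x - t • d w = n + t • (y - d w) := by
      rw [← hns, smul_sub]; abel
    rw [e]
    exact add_mem hn (Submodule.smul_mem _ t hw)
  obtain ⟨u, hu⟩ := hP _ h3
  refine ⟨u, ?_⟩
  rw [Submodule.sup_smul]
  refine Submodule.mem_sup.mpr ⟨x - t • w - d u, hu, t • w,
    Submodule.smul_mem_smul (Ideal.mem_span_singleton_self t) trivial, by abel⟩

end Modules

end

end Stmt13Aux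

open Stmt13Aux in
/-- Let `C` be a finite free module over `R = 𝔽₂[ℤ³]` and
`∂ : C → C` an `R`-linear differential with `∂ ∘ ∂ = 0`.  If the homology of
`(C, ∂)` vanishes (`ker ∂ = range ∂`), then the homology of the base change
of `(C, ∂)` along the augmentation `ε : R → 𝔽₂` also vanishes. -/
theorem stmt13 {C : Type*} [AddCommGroup C] [Module GroupAlgZ3 C]
    [Module.Free GroupAlgZ3 C] [Module.Finite GroupAlgZ3 C]
    (d : C →ₗ[GroupAlgZ3] C) (hd : d ∘ₗ d = 0)
    (hH : LinearMap.ker d = LinearMap.range d) :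
    LinearMap.ker (LinearMap.baseChange (ZMod 2) d) =
      LinearMap.range (LinearMap.baseChange (ZMod 2) d) := by
  classical
  set R := GroupAlgZ3
  have hd' : ∀ x : C, d (d x) = 0 := fun x => by
    have := LinearMap.ext_iff.mp hd x
    simpa using this
  set J3 : Ideal GroupAlgZ3 := Ideal.span {tt 0, tt 1, tt 2} with hJ3
  set N3 : Submodule GroupAlgZ3 C := J3 • (⊤ : Submodule GroupAlgZ3 C) with hN3
  -- a basis of C
  let b := Module.Free.chooseBasis GroupAlgZ3 C
  -- the chain of three regular-element steps
  have hP0 : ∀ x : C, d x ∈ (⊥ : Ideal GroupAlgZ3) • (⊤ : Submodule GroupAlgZ3 C) →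
      ∃ w, x - d w ∈ (⊥ : Ideal GroupAlgZ3) • (⊤ : Submodule GroupAlgZ3 C) := by
    intro x hx
    rw [Submodule.bot_smul, Submodule.mem_bot] at hx
    have : x ∈ LinearMap.range d := hH ▸ LinearMap.mem_ker.mpr hx
    obtain ⟨w, hw⟩ := this
    exact ⟨w, by rw [hw, Submodule.bot_smul, Submodule.mem_bot, sub_self]⟩
  have hreg0 : ∀ z : C, tt 0 • z ∈ (⊥ : Ideal GroupAlgZ3) • (⊤ : Submodule GroupAlgZ3 C) →
      z ∈ (⊥ : Ideal GroupAlgZ3) • (⊤ : Submodule GroupAlgZ3 C) := by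
    intro z hz
    refine regM b (tt 0) ⊥ (fun a ha => ?_) z hz
    rw [Submodule.mem_bot] at ha ⊢
    exact reg0 a ha
  have hP1 := step d hd' ⊥ (tt 0) hreg0 hP0
  have e1 : ((⊥ : Ideal GroupAlgZ3) ⊔ Ideal.span {tt 0}) = Ideal.span {tt 0} :=
    bot_sup_eq _
  rw [e1] at hP1
  have hreg1 : ∀ z : C, tt 1 • z ∈ Ideal.span {tt 0} • (⊤ : Submodule GroupAlgZ3 C) →
      z ∈ Ideal.span {tt 0} • (⊤ : Submodule GroupAlgZ3 C) :=
    fun z hz => regM b (tt 1) _ (fun a ha => reg1 a ha) z hz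
  have hP2 := step d hd' (Ideal.span {tt 0}) (tt 1) hreg1 hP1
  have e2 : (Ideal.span {tt 0} ⊔ Ideal.span {tt 1}) = Ideal.span {tt 0, tt 1} :=
    (Ideal.span_insert (tt 0) {tt 1}).symm
  rw [e2] at hP2
  have hreg2 : ∀ z : C, tt 2 • z ∈ Ideal.span {tt 0, tt 1} • (⊤ : Submodule GroupAlgZ3 C) →
      z ∈ Ideal.span {tt 0, tt 1} • (⊤ : Submodule GroupAlgZ3 C) :=
    fun z hz => regM b (tt 2) _ (fun a ha => reg2 a ha) z hz
  have hP3 := step d hd' (Ideal.span {tt 0, tt 1}) (tt 2) hreg2 hP2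
  have e3 : (Ideal.span {tt 0, tt 1} ⊔ Ideal.span {tt 2}) = J3 := by
    rw [hJ3]
    simp [Ideal.span_insert, sup_assoc]
  rw [e3] at hP3
  -- hP3 : ∀ x, d x ∈ N3 → ∃ w, x - d w ∈ N3
  -- the comparison map G : ZMod 2 ⊗ C → C ⧸ N3
  have hsub : ∀ r : GroupAlgZ3, AddMonoidAlgebra.single (0 : Fin 3 → ℤ) (augEps r) - r ∈ J3 := fun r => by
    have := sub_const_mem r
    rw [hJ3]
    simpa using neg_mem this
  let sg : ZMod 2 → GroupAlgZ3 := fun c => AddMonoidAlgebra.single (0 : Fin 3 → ℤ) c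
  have sg_add : ∀ s t : ZMod 2, sg (s + t) = sg s + sg t := fun s t =>
    AddMonoidAlgebra.single_add 0 s t
  have sg_mul : ∀ s t : ZMod 2, sg (s * t) = sg s * sg t := fun s t => by
    show _ = AddMonoidAlgebra.single (0 : Fin 3 → ℤ) s * AddMonoidAlgebra.single (0 : Fin 3 → ℤ) t
    rw [AddMonoidAlgebra.single_mul_single, add_zero]
  have sg_one : sg 1 = 1 := (AddMonoidAlgebra.one_def).symm
  have hsub' : ∀ r : GroupAlgZ3, sg (augEps r) - r ∈ J3 := hsub
  let β : ZMod 2 →ₗ[GroupAlgZ3] C →ₗ[GroupAlgZ3] C ⧸ N3 :=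
    { toFun := fun s => sg s • N3.mkQ
      map_add' := fun s t => by
        show sg (s + t) • N3.mkQ = sg s • N3.mkQ + sg t • N3.mkQ
        rw [sg_add, add_smul]
      map_smul' := fun r s => by
        have hsmul : r • s = augEps r * s := Algebra.smul_def r s
        ext x
        show sg (r • s) • N3.mkQ x = r • (sg s • N3.mkQ x)
        rw [hsmul, sg_mul, mul_smul]
        rw [show r • (sg s • N3.mkQ x) = (r * sg s) • N3.mkQ x from smul_smul r _ _,
          mul_smul]
        have key : (sg (augEps r) - r) • (sg s • N3.mkQ x) = 0 := by
          rw [show (sg s • N3.mkQ x) = N3.mkQ (sg s • x) from (map_smul N3.mkQ _ x).symm,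
            show (sg (augEps r) - r) • N3.mkQ (sg s • x)
              = N3.mkQ ((sg (augEps r) - r) • (sg s • x)) from
              (map_smul N3.mkQ _ _).symm]
          rw [Submodule.mkQ_apply, Submodule.Quotient.mk_eq_zero]
          exact Submodule.smul_mem_smul (hsub' r) trivial
        exact sub_eq_zero.mp (by rw [← sub_smul]; exact key) }
  let G := TensorProduct.lift β
  have hG : ∀ x : C, G ((1 : ZMod 2) ⊗ₜ[GroupAlgZ3] x) = N3.mkQ x := by
    intro x
    have h1 : G ((1 : ZMod 2) ⊗ₜ[GroupAlgZ3] x) = (β 1) x :=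
      TensorProduct.lift.tmul 1 x
    rw [h1]
    show sg 1 • N3.mkQ x = N3.mkQ x
    rw [sg_one, one_smul]
  have K2 : ∀ x : C, (1 : ZMod 2) ⊗ₜ[GroupAlgZ3] x = 0 → x ∈ N3 := by
    intro x h
    have h2 := hG x
    rw [h, map_zero] at h2
    rwa [Submodule.mkQ_apply, eq_comm, Submodule.Quotient.mk_eq_zero] at h2
  have K1 : ∀ x ∈ N3, (1 : ZMod 2) ⊗ₜ[GroupAlgZ3] x = (0 : TensorProduct GroupAlgZ3 (ZMod 2) C) := by
    intro x hx
    refine Submodule.smul_induction_on hx ?_ ?_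
    · intro r hr n _
      have h1 : (1 : ZMod 2) ⊗ₜ[GroupAlgZ3] (r • n) = (r • (1 : ZMod 2)) ⊗ₜ[GroupAlgZ3] n :=
        (TensorProduct.smul_tmul r (1 : ZMod 2) n).symm
      have h2 : r • (1 : ZMod 2) = 0 := by
        rw [Algebra.smul_def r (1 : ZMod 2), mul_one]
        exact span_le_ker (hJ3 ▸ hr)
      rw [h1, h2, TensorProduct.zero_tmul]
    · intro x y hx hy
      rw [TensorProduct.tmul_add, hx, hy, add_zero]
  have surj : ∀ ξ : TensorProduct GroupAlgZ3 (ZMod 2) C, ∃ x : C, ξ = (1 : ZMod 2) ⊗ₜ[GroupAlgZ3] x := by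
    intro ξ
    induction ξ using TensorProduct.induction_on with
    | zero => exact ⟨0, (TensorProduct.tmul_zero C (1 : ZMod 2)).symm⟩
    | tmul s m =>
      rcases (by decide : ∀ s : ZMod 2, s = 0 ∨ s = 1) s with rfl | rfl
      · exact ⟨0, by rw [TensorProduct.zero_tmul, TensorProduct.tmul_zero]⟩
      · exact ⟨m, rfl⟩
    | add x y hx hy =>
      obtain ⟨a, rfl⟩ := hx
      obtain ⟨c, rfl⟩ := hy
      exact ⟨a + c, (TensorProduct.tmul_add _ a c).symm⟩
  -- finish
  apply le_antisymm
  · intro ξ hξ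
    obtain ⟨x, rfl⟩ := surj ξ
    rw [LinearMap.mem_ker, LinearMap.baseChange_tmul] at hξ
    have hdx : d x ∈ N3 := K2 (d x) hξ
    obtain ⟨w, hw⟩ := hP3 x hdx
    refine ⟨(1 : ZMod 2) ⊗ₜ[GroupAlgZ3] w, ?_⟩
    rw [LinearMap.baseChange_tmul]
    have h0 := K1 _ hw
    rw [TensorProduct.tmul_sub] at h0
    exact (sub_eq_zero.mp h0).symm
  · rintro ξ ⟨η, rfl⟩
    obtain ⟨w, rfl⟩ := surj η
    rw [LinearMap.mem_ker, LinearMap.baseChange_tmul, LinearMap.baseChange_tmul, hd' w,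
      TensorProduct.tmul_zero]
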